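/- Let n ≥ 1 be an integer and c ∈ Ω'_n a valid configuration. Suppose p ∈ ℤ^2 and d ≥ 1 are such that c(p) and c(p+(d,0)) are junction tiles (elements of J'_n) and c(p+(e,0)) is not a junction tile for every 0 < e < d. Then d ∈ {n, n+1, n+2}, and the word of bottom labels (bottom label of c(p+(e,0)))_{e=0,…,d−1} belongs to {00n, 01n, 01n̄} · {11n, 11n̄}^{d−1}. -/

import Mathlib

structure WangTile (C : Type*) where
  right : C
  top : C
  left : C
  bottom : C
deriving DecidableEq

abbrev Lbl : Type := ℤ × ℤ × ℤ

def Vn (n : ℤ) : Set Lbl :=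
  {v | 0 ≤ v.1 ∧ v.1 ≤ v.2.1 ∧ v.2.1 ≤ 1 ∧ v.2.1 ≤ v.2.2 ∧ v.2.2 ≤ n + 1}

def hatT {C : Type*} (t : WangTile C) : WangTile C :=
  ⟨t.top, t.right, t.bottom, t.left⟩

def whiteTiles (n : ℤ) : Set (WangTile Lbl) :=
  {t | ∃ i j : ℤ, 1 ≤ i ∧ i ≤ n ∧ 1 ≤ j ∧ j ≤ n ∧
    t = ⟨(1, 1, i + 1), (1, 1, j + 1), (1, 1, i), (1, 1, j)⟩}

def blueH (n : ℤ) : Set (WangTile Lbl) :=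
  {t | ∃ i : ℤ, 0 ≤ i ∧ i ≤ n ∧ t = ⟨(0, 0, i + 1), (1, 1, 1), (0, 0, i), (1, 1, n)⟩}

def greenH (n : ℤ) : Set (WangTile Lbl) :=
  {t | ∃ i : ℤ, 0 ≤ i ∧ i ≤ n ∧ t = ⟨(0, 1, i + 1), (1, 1, 1), (0, 0, i), (1, 1, n + 1)⟩}

def yellowH (n : ℤ) : Set (WangTile Lbl) :=
  {t | ∃ i : ℤ, 1 ≤ i ∧ i ≤ n ∧ t = ⟨(0, 1, i + 1), (1, 1, 2), (0, 1, i), (1, 1, n + 1)⟩}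

def antiH (n : ℤ) : Set (WangTile Lbl) :=
  {t | ∃ i : ℤ, 1 ≤ i ∧ i ≤ n ∧ t = ⟨(0, 0, i + 1), (1, 1, 2), (0, 1, i), (1, 1, n)⟩}

def junctionTile (n k l r s : ℤ) : WangTile Lbl :=
  ⟨(0, k, l), (0, r, s), (0, s, r + n), (0, l, k + n)⟩

def jPairs : Set (ℤ × ℤ) := {(0, 0), (0, 1), (1, 1)}

def junctions (n : ℤ) : Set (WangTile Lbl) :=
  {t | ∃ k l r s : ℤ, (k, l) ∈ jPairs ∧ (r, s) ∈ jPairs ∧ t = junctionTile n k l r s}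

def Text (n : ℤ) : Set (WangTile Lbl) :=
  whiteTiles n ∪ blueH n ∪ greenH n ∪ yellowH n ∪ antiH n ∪
    hatT '' blueH n ∪ hatT '' greenH n ∪ hatT '' yellowH n ∪ hatT '' antiH n ∪ junctions n

def Dset (n : ℤ) : Set (WangTile Lbl) :=
  {(⟨(0, 0, n + 1), (1, 1, 1), (0, 0, n), (1, 1, n)⟩ : WangTile Lbl),
    hatT (⟨(0, 0, n + 1), (1, 1, 1), (0, 0, n), (1, 1, n)⟩ : WangTile Lbl),
    junctionTile n 0 0 1 1, junctionTile n 1 1 0 0}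

def Tmet (n : ℤ) : Set (WangTile Lbl) :=
  Text n \ (antiH n ∪ hatT '' antiH n ∪ Dset n)

def ValidConfig {C : Type*} (T : Set (WangTile C)) (x : ℤ × ℤ → WangTile C) : Prop :=
  (∀ m, x m ∈ T) ∧
    (∀ m : ℤ × ℤ, (x m).right = (x (m.1 + 1, m.2)).left) ∧
    (∀ m : ℤ × ℤ, (x m).top = (x (m.1, m.2 + 1)).bottom)

def ValidPattern {C : Type*} (T : Set (WangTile C)) (w h : ℕ) (p : ℕ → ℕ → WangTile C) : Prop :=
  (∀ i j, i < w → j < h → p i j ∈ T) ∧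
    (∀ i j, i + 1 < w → j < h → (p i j).right = (p (i + 1) j).left) ∧
    (∀ i j, i < w → j + 1 < h → (p i j).top = (p i (j + 1)).bottom)

def bottomWord {C : Type*} (w : ℕ) (p : ℕ → ℕ → WangTile C) : List C :=
  (List.range w).map fun i => (p i 0).bottom

def topWord {C : Type*} (w h : ℕ) (p : ℕ → ℕ → WangTile C) : List C :=
  (List.range w).map fun i => (p i (h - 1)).top

def leftWord {C : Type*} (h : ℕ) (p : ℕ → ℕ → WangTile C) : List C :=
  (List.range h).map fun j => (p 0 j).left

def rightWord {C : Type*} (w h : ℕ) (p : ℕ → ℕ → WangTile C) : List C :=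
  (List.range h).map fun j => (p (w - 1) j).right

def tau (n : ℤ) (v : Lbl) : List Lbl :=
  if v.1 = v.2.2 then
    (0, v.1 - v.2.1 + 1, n + 1) :: List.replicate (n - v.2.2).toNat (1, 1, n + 1)
  else
    (0, v.1 - v.2.1 + 1, n) ::
      (List.replicate (v.2.2 - v.1 - 1).toNat (1, 1, n) ++
        List.replicate (n + 1 - v.2.2).toNat (1, 1, n + 1))

lemma step_lemma (n : ℤ) (t : WangTile Lbl) (ht : t ∈ Text n) (hj : t ∉ junctions n)
    (a i : ℤ) (hl : t.left = (0, a, i)) :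
    ∃ a' : ℤ, (a' = 0 ∨ a' = 1) ∧ t.right = (0, a', i + 1) ∧
      (t.bottom = (1, 1, n) ∨ t.bottom = (1, 1, n + 1)) := by
  rcases ht with ((((((((hw | hb) | hg) | hy) | ha) | hhb) | hhg) | hhy) | hha) | hjn
  · obtain ⟨i', j', _, _, _, _, rfl⟩ := hw; simp at hl
  · obtain ⟨i', _, _, rfl⟩ := hb
    simp only [Prod.mk.injEq, true_and] at hl
    exact ⟨0, Or.inl rfl, by simp [hl.2], Or.inl rfl⟩
  · obtain ⟨i', _, _, rfl⟩ := hg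
    simp only [Prod.mk.injEq, true_and] at hl
    exact ⟨1, Or.inr rfl, by simp [hl.2], Or.inr rfl⟩
  · obtain ⟨i', _, _, rfl⟩ := hy
    simp only [Prod.mk.injEq, true_and] at hl
    exact ⟨1, Or.inr rfl, by simp [hl.2], Or.inr rfl⟩
  · obtain ⟨i', _, _, rfl⟩ := ha
    simp only [Prod.mk.injEq, true_and] at hl
    exact ⟨0, Or.inl rfl, by simp [hl.2], Or.inl rfl⟩
  · obtain ⟨s, hs, rfl⟩ := hhb; obtain ⟨i', _, _, rfl⟩ := hs; simp [hatT] at hl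
  · obtain ⟨s, hs, rfl⟩ := hhg; obtain ⟨i', _, _, rfl⟩ := hs; simp [hatT] at hl
  · obtain ⟨s, hs, rfl⟩ := hhy; obtain ⟨i', _, _, rfl⟩ := hs; simp [hatT] at hl
  · obtain ⟨s, hs, rfl⟩ := hha; obtain ⟨i', _, _, rfl⟩ := hs; simp [hatT] at hl
  · exact absurd hjn hj

/-- distance between consecutive junction tiles in a row of a configuration
of `Ω'_n`, and the structure of the word of bottom labels between them. -/
theorem stmt8 (n : ℤ) (hn : 1 ≤ n) (c : ℤ × ℤ → WangTile Lbl)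
    (hc : ValidConfig (Text n) c) (p : ℤ × ℤ) (d : ℤ) (hd : 1 ≤ d)
    (h0 : c p ∈ junctions n) (h1 : c (p.1 + d, p.2) ∈ junctions n)
    (h2 : ∀ e : ℤ, 0 < e → e < d → c (p.1 + e, p.2) ∉ junctions n) :
    (d = n ∨ d = n + 1 ∨ d = n + 2) ∧
    (c p).bottom ∈ ({(0, 0, n), (0, 1, n), (0, 1, n + 1)} : Set Lbl) ∧
    (∀ e : ℤ, 1 ≤ e → e < d →
      (c (p.1 + e, p.2)).bottom ∈ ({(1, 1, n), (1, 1, n + 1)} : Set Lbl)) := by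
  obtain ⟨k, l, r, s, hkl, hrs, hcp⟩ := h0
  simp only [jPairs, Set.mem_insert_iff, Set.mem_singleton_iff, Prod.mk.injEq] at hkl
  have hl01 : (k = 0 ∧ l = 0) ∨ (k = 0 ∧ l = 1) ∨ (k = 1 ∧ l = 1) := hkl
  -- key induction: the right label of the tile at p + e is (0, a, l + e)
  have key : ∀ e : ℤ, 0 ≤ e → e ≤ d - 1 →
      ∃ a : ℤ, (a = 0 ∨ a = 1) ∧ (c (p.1 + e, p.2)).right = (0, a, l + e) := by
    intro e he
    refine Int.le_induction (motive := fun e _ => e ≤ d - 1 →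
      ∃ a : ℤ, (a = 0 ∨ a = 1) ∧ (c (p.1 + e, p.2)).right = (0, a, l + e)) ?_ ?_ e he
    · intro _
      refine ⟨k, ?_, ?_⟩
      · rcases hl01 with ⟨hk, _⟩ | ⟨hk, _⟩ | ⟨hk, _⟩ <;> simp [hk]
      · have : (p.1 + 0, p.2) = p := by simp
        rw [this, hcp]; simp [junctionTile]
    · intro e he IH hlt
      obtain ⟨a, ha, hr⟩ := IH (by omega)
      have hv := hc.2.1 (p.1 + e, p.2)
      dsimp only at hv
      rw [show p.1 + e + 1 = p.1 + (e + 1) by ring] at hv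
      have hleft : (c (p.1 + (e + 1), p.2)).left = (0, a, l + e) := by rw [← hv, hr]
      obtain ⟨a', ha', hr', _⟩ := step_lemma n (c (p.1 + (e + 1), p.2)) (hc.1 _)
        (h2 (e + 1) (by omega) (by omega)) a (l + e) hleft
      exact ⟨a', ha', by rw [hr']; congr 2; ring⟩
  obtain ⟨a, ha, hr⟩ := key (d - 1) (by omega) le_rfl
  obtain ⟨k', l', r', s', hkl', hrs', hcq⟩ := h1
  simp only [jPairs, Set.mem_insert_iff, Set.mem_singleton_iff, Prod.mk.injEq] at hrs'
  have hv := hc.2.1 (p.1 + (d - 1), p.2)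
  dsimp only at hv
  rw [show p.1 + (d - 1) + 1 = p.1 + d by ring, hcq, hr] at hv
  have hveq : (0, a, l + (d - 1)) = ((0 : ℤ), s', r' + n) := by
    simpa [junctionTile] using hv
  have hthird : l + (d - 1) = r' + n := by
    have := congrArg (fun x : Lbl => x.2.2) hveq
    simpa using this
  refine ⟨?_, ?_, ?_⟩
  · rcases hl01 with ⟨_, hl⟩ | ⟨_, hl⟩ | ⟨_, hl⟩ <;>
      rcases hrs' with ⟨hr', _⟩ | ⟨hr', _⟩ | ⟨hr', _⟩ <;> omega
  · rw [hcp]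
    rcases hl01 with ⟨hk, hl⟩ | ⟨hk, hl⟩ | ⟨hk, hl⟩ <;>
      simp [junctionTile, hk, hl, add_comm]
  · intro e he1 he2
    obtain ⟨a1, ha1, hr1⟩ := key (e - 1) (by omega) (by omega)
    have hv1 := hc.2.1 (p.1 + (e - 1), p.2)
    dsimp only at hv1
    rw [show p.1 + (e - 1) + 1 = p.1 + e by ring] at hv1
    have hleft : (c (p.1 + e, p.2)).left = (0, a1, l + (e - 1)) := by rw [← hv1, hr1]
    obtain ⟨a', _, _, hb⟩ := step_lemma n (c (p.1 + e, p.2)) (hc.1 _)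
      (h2 e (by omega) he2) a1 (l + (e - 1)) hleft
    rcases hb with hb | hb <;> simp [hb]
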